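/- Let (X,T) be a simple, properly ordered Bratteli-Vershik system and suppose that level n+1 of its diagram is uniformly ordered and has more than one vertex. Then there is a depth n pair of paths with an (n+1) cut. -/

import Mathlib

set_option autoImplicit false

/-- An ordered Bratteli diagram: finite nonempty vertex sets `V n`, a single root
vertex at level `0`, finite edge sets `E n` (edges from level `n` to level `n+1`,
multiple edges allowed), every vertex has an outgoing edge, every non-root vertex
an incoming edge, and the edges into each vertex carry a linear order, encoded by
the relation `elt` which relates only edges with the same target. -/
structure BDiagram where
  V : ℕ → Type
  E : ℕ → Type
  fintV : ∀ n, Fintype (V n)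
  fintE : ∀ n, Fintype (E n)
  nonV : ∀ n, Nonempty (V n)
  rootSubsingleton : Subsingleton (V 0)
  src : ∀ {n}, E n → V n
  tgt : ∀ {n}, E n → V (n + 1)
  hasOut : ∀ (n : ℕ) (v : V n), ∃ e : E n, src e = v
  hasIn : ∀ (n : ℕ) (v : V (n + 1)), ∃ e : E n, tgt e = v
  elt : ∀ {n}, E n → E n → Prop
  elt_tgt : ∀ (n : ℕ) (e f : E n), elt e f → tgt e = tgt f
  elt_irrefl : ∀ (n : ℕ) (e : E n), ¬ elt e e
  elt_trans : ∀ (n : ℕ) (e f g : E n), elt e f → elt f g → elt e g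
  elt_total : ∀ (n : ℕ) (e f : E n), tgt e = tgt f → e ≠ f → elt e f ∨ elt f e

namespace BDiagram

variable (B : BDiagram)

def castV {m n : ℕ} (h : m = n) (v : B.V m) : B.V n := h ▸ v

/-- An edge is minimal if no edge (into the same target) is below it. -/
def IsMinEdge {n : ℕ} (e : B.E n) : Prop := ∀ e' : B.E n, ¬ B.elt e' e

/-- An edge is maximal if no edge (into the same target) is above it. -/
def IsMaxEdge {n : ℕ} (e : B.E n) : Prop := ∀ e' : B.E n, ¬ B.elt e e'

/-- The space of infinite paths from the root. -/
def PathSpace : Type := { x : ∀ n, B.E n // ∀ n, B.tgt (x n) = B.src (x (n + 1)) }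

def IsMinPath (x : B.PathSpace) : Prop := ∀ n, B.IsMinEdge (x.1 n)

def IsMaxPath (x : B.PathSpace) : Prop := ∀ n, B.IsMaxEdge (x.1 n)

/-- Properly ordered: unique minimal and unique maximal path. -/
def ProperlyOrdered : Prop :=
  (∃! x : B.PathSpace, B.IsMinPath x) ∧ (∃! x : B.PathSpace, B.IsMaxPath x)

/-- The partial order on cofinal paths: `x < y` iff they eventually agree and at the
last disagreement the edge of `x` is below the edge of `y`. -/
def pathLT (x y : B.PathSpace) : Prop :=
  ∃ N : ℕ, B.elt (x.1 N) (y.1 N) ∧ ∀ n : ℕ, N < n → x.1 n = y.1 n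

/-- `T` is the Vershik map: each non-maximal path goes to its successor, and each
maximal path goes to a minimal path. -/
def IsVershik (T : B.PathSpace ≃ B.PathSpace) : Prop :=
  (∀ x : B.PathSpace, ¬ B.IsMaxPath x →
    B.pathLT x (T x) ∧ ∀ z : B.PathSpace, B.pathLT x z → ¬ B.pathLT z (T x)) ∧
  (∀ x : B.PathSpace, B.IsMaxPath x → B.IsMinPath (T x))

/-- `f` is a chain of consecutive edges on levels `[a, b)`. -/
def SegOn (f : ∀ i, B.E i) (a b : ℕ) : Prop :=
  ∀ i : ℕ, a ≤ i → i + 1 < b → B.tgt (f i) = B.src (f (i + 1))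

/-- Simplicity: some telescoping has complete connections between adjacent levels. -/
def Simple : Prop :=
  ∃ ns : ℕ → ℕ, StrictMono ns ∧ ns 0 = 0 ∧
    ∀ (l c : ℕ), ns (l + 1) = c + 1 →
      ∀ (v : B.V (ns l)) (w : B.V (c + 1)),
        ∃ f : ∀ i, B.E i, B.SegOn f (ns l) (c + 1) ∧ B.src (f (ns l)) = v ∧ B.tgt (f c) = w

/-- The natural (Cantor) topology on the path space, induced from the product of
the discrete topologies on the edge sets. -/
def pathTop : TopologicalSpace B.PathSpace :=
  TopologicalSpace.induced Subtype.val (@Pi.topologicalSpace ℕ B.E (fun _ => ⊥))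

/-- Integer iterates of a bijection of the path space. -/
def iterZ (T : B.PathSpace ≃ B.PathSpace) (m : ℤ) : B.PathSpace ≃ B.PathSpace :=
  (T : Equiv.Perm B.PathSpace) ^ m

/-- Two paths have the same `k`-coding: for every time `m` the initial segments of
`T^m x` and `T^m y` from the root to level `k` coincide. -/
def SameCoding (T : B.PathSpace ≃ B.PathSpace) (k : ℕ) (x y : B.PathSpace) : Prop :=
  ∀ (m : ℤ) (i : ℕ), i < k → ((B.iterZ T m) x).1 i = ((B.iterZ T m) y).1 i

/-- A depth `k` pair: distinct paths with the same `k`-coding but not the same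
`(k+1)`-coding. -/
def DepthPair (T : B.PathSpace ≃ B.PathSpace) (k : ℕ) (x y : B.PathSpace) : Prop :=
  x ≠ y ∧ B.SameCoding T k x y ∧ ¬ B.SameCoding T (k + 1) x y

/-- The pair `x, y` has a `j` cut: for some time `m`, both `T^m x` and `T^m y` are
minimal from the root into level `j`. -/
def HasCut (T : B.PathSpace ≃ B.PathSpace) (j : ℕ) (x y : B.PathSpace) : Prop :=
  ∃ m : ℤ, (∀ i : ℕ, i < j → B.IsMinEdge (((B.iterZ T m) x).1 i)) ∧
    (∀ i : ℕ, i < j → B.IsMinEdge (((B.iterZ T m) y).1 i))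

/-- Nonexpansive: for every `k ≥ 1` there are two distinct paths with the same
`k`-coding. -/
def Nonexpansive (T : B.PathSpace ≃ B.PathSpace) : Prop :=
  ∀ k : ℕ, 1 ≤ k → ∃ x y : B.PathSpace, x ≠ y ∧ B.SameCoding T k x y

/-- Well timed: for every `k ≥ 1` and every `j > k` there is a depth `k` pair with
a `j` cut. -/
def WellTimed (T : B.PathSpace ≃ B.PathSpace) : Prop :=
  ∀ k : ℕ, 1 ≤ k → ∀ j : ℕ, k < j →
    ∃ x y : B.PathSpace, B.DepthPair T k x y ∧ B.HasCut T j x y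

/-- Very well timed: for every `k ≥ 1` there is a depth `k` pair having a `j` cut
for every `j > k`. -/
def VeryWellTimed (T : B.PathSpace ≃ B.PathSpace) : Prop :=
  ∀ k : ℕ, 1 ≤ k →
    ∃ x y : B.PathSpace, B.DepthPair T k x y ∧ ∀ j : ℕ, k < j → B.HasCut T j x y

/-- Weakly well timed: for infinitely many `k ≥ 1`, for every `j > k` there is a
depth `k` pair with a `j` cut. -/
def WeaklyWellTimed (T : B.PathSpace ≃ B.PathSpace) : Prop :=
  ∀ K : ℕ, ∃ k : ℕ, K ≤ k ∧ 1 ≤ k ∧ ∀ j : ℕ, k < j →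
    ∃ x y : B.PathSpace, B.DepthPair T k x y ∧ B.HasCut T j x y

/-- Untimed: for every `k ≥ 1` there is a `j > k` such that no depth `k` pair has a
`j` cut. -/
def Untimed (T : B.PathSpace ≃ B.PathSpace) : Prop :=
  ∀ k : ℕ, 1 ≤ k → ∃ j : ℕ, k < j ∧
    ∀ x y : B.PathSpace, B.DepthPair T k x y → ¬ B.HasCut T j x y

/-- Very untimed: for every `k ≥ 1`, no depth `k` pair has a `(k+1)` cut. -/
def VeryUntimed (T : B.PathSpace ≃ B.PathSpace) : Prop :=
  ∀ k : ℕ, 1 ≤ k →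
    ∀ x y : B.PathSpace, B.DepthPair T k x y → ¬ B.HasCut T (k + 1) x y

/-- Finite paths from the root to level `n`. -/
def FinPath (n : ℕ) : Type :=
  { f : (i : Fin n) → B.E i.val //
    ∀ (i : ℕ) (h : i + 1 < n), B.tgt (f ⟨i, by omega⟩) = B.src (f ⟨i + 1, h⟩) }

/-- The lexicographic (from the end) order on finite paths to level `n` induced by
the orders on the edges. -/
def finLT {n : ℕ} (p q : B.FinPath n) : Prop :=
  ∃ (N : ℕ) (h : N < n), B.elt (p.1 ⟨N, h⟩) (q.1 ⟨N, h⟩) ∧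
    ∀ (i : ℕ) (hi : i < n), N < i → p.1 ⟨i, hi⟩ = q.1 ⟨i, hi⟩

/-- The finite path `p` to level `n` ends at the vertex `v`. -/
def EndsAt {n : ℕ} (p : B.FinPath n) (v : B.V n) : Prop :=
  ∀ (m : ℕ) (h : n = m + 1), B.tgt (p.1 ⟨m, by omega⟩) = B.castV h v

/-- The initial segment of an infinite path, from the root to level `n`. -/
def pathInit (x : B.PathSpace) (n : ℕ) : B.FinPath n :=
  ⟨fun i => x.1 i.val, fun i _ => x.2 i⟩

/-- The vertex of an infinite path at level `n`. -/
def pathVert (x : B.PathSpace) (n : ℕ) : B.V n := B.src (x.1 n)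

theorem pathInit_endsAt (x : B.PathSpace) (n : ℕ) :
    B.EndsAt (B.pathInit x n) (B.pathVert x n) := by
  intro m h
  subst h
  exact x.2 m

/-- Truncation of a finite path to a lower level. -/
def truncTo {n : ℕ} (k : ℕ) (hk : k ≤ n) (p : B.FinPath n) : B.FinPath k :=
  ⟨fun i => p.1 ⟨i.val, by omega⟩, fun i h => p.2 i (by omega)⟩

/-- Paths `x, x'` are `k`-equivalent at level `n`: there is an order isomorphism
between the sets of finite paths from the root into their level-`n` vertices which
preserves truncations to level `k` (equality of `k`-basic blocks) and which matches
the initial segment of `x` with the initial segment of `x'` (the "dot" is in the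
same place). -/
def KEquivAt (k n : ℕ) (x x' : B.PathSpace) : Prop :=
  ∃ φ : { p : B.FinPath n // B.EndsAt p (B.pathVert x n) } ≃
      { p : B.FinPath n // B.EndsAt p (B.pathVert x' n) },
    (∀ p q, B.finLT p.1 q.1 ↔ B.finLT (φ p).1 (φ q).1) ∧
    (∀ p (i : ℕ) (hik : i < k) (hin : i < n), ((φ p).1).1 ⟨i, hin⟩ = (p.1).1 ⟨i, hin⟩) ∧
    φ ⟨B.pathInit x n, B.pathInit_endsAt x n⟩ = ⟨B.pathInit x' n, B.pathInit_endsAt x' n⟩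

/-- Paths are `k`-equivalent: they agree from the root to level `k` and are
`k`-equivalent at every level `n > k`. -/
def KEquivPaths (k : ℕ) (x x' : B.PathSpace) : Prop :=
  (∀ i : ℕ, i < k → x.1 i = x'.1 i) ∧ ∀ n : ℕ, k < n → B.KEquivAt k n x x'

/-- Standard nonexpansive: for every `k ≥ 1` there is a pair of distinct
`k`-equivalent paths. -/
def SNE : Prop := ∀ k : ℕ, 1 ≤ k → ∃ x x' : B.PathSpace, x ≠ x' ∧ B.KEquivPaths k x x'

/-!  ### Telescoping  -/

theorem castV_eq_of_heq {m n : ℕ} (h : m = n) {v : B.V m} {w : B.V n} (hw : HEq v w) :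
    B.castV h v = w := by
  subst h
  exact eq_of_heq hw

theorem castV_heq {m n : ℕ} (h : m = n) (v : B.V m) : HEq (B.castV h v) v := by
  subst h
  rfl

theorem castV_inj {m n : ℕ} (h : m = n) {v w : B.V m}
    (hvw : B.castV h v = B.castV h w) : v = w := by
  subst h
  exact hvw

def castE {m n : ℕ} (h : m = n) (e : B.E m) : B.E n := h ▸ e

noncomputable def chainFrom (a : ℕ) (v : B.V a) : (i : ℕ) → B.E (a + i)
  | 0 => (B.hasOut a v).choose
  | i + 1 => (B.hasOut (a + i + 1) (B.tgt (chainFrom a v i))).choose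

theorem chainFrom_src_zero (a : ℕ) (v : B.V a) : B.src (B.chainFrom a v 0) = v :=
  (B.hasOut a v).choose_spec

theorem chainFrom_src_succ (a : ℕ) (v : B.V a) (i : ℕ) :
    B.src (B.chainFrom a v (i + 1)) = B.tgt (B.chainFrom a v i) :=
  (B.hasOut (a + i + 1) (B.tgt (B.chainFrom a v i))).choose_spec

noncomputable def chainTo (a : ℕ) : (j : ℕ) → (w : B.V (a + j + 1)) → (i : ℕ) → i ≤ j → B.E (a + i)
  | 0, w, i, _ => B.castE (by omega : a + 0 = a + i) (B.hasIn a w).choose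
  | j + 1, w, i, _ =>
      if h : i ≤ j then chainTo a j (B.src (B.hasIn (a + j + 1) w).choose) i h
      else B.castE (by omega : a + (j + 1) = a + i) (B.hasIn (a + j + 1) w).choose

theorem chainTo_tgt_last (a : ℕ) : ∀ (j : ℕ) (w : B.V (a + j + 1)),
    B.tgt (B.chainTo a j w j le_rfl) = w := by
  intro j w
  cases j with
  | zero =>
      simp only [chainTo]
      exact (B.hasIn a w).choose_spec
  | succ j =>
      simp only [chainTo]
      rw [dif_neg (by omega : ¬ j + 1 ≤ j)]
      exact (B.hasIn (a + j + 1) w).choose_spec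

theorem chainTo_chain (a : ℕ) : ∀ (j : ℕ) (w : B.V (a + j + 1)) (i : ℕ) (h : i + 1 ≤ j)
    (h' : i ≤ j), B.tgt (B.chainTo a j w i h') = B.src (B.chainTo a j w (i + 1) h) := by
  intro j
  induction j with
  | zero => intro w i h h'; omega
  | succ j ih =>
      intro w i h h'
      by_cases hij : i + 1 ≤ j
      · simp only [chainTo]
        rw [dif_pos (by omega : i ≤ j), dif_pos hij]
        exact ih _ i hij (by omega)
      · have hi : i = j := by omega
        subst hi
        simp only [chainTo]
        rw [dif_pos (le_refl i), dif_neg (by omega : ¬ i + 1 ≤ i)]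
        exact B.chainTo_tgt_last a i _


def TelE (a b : ℕ) : Type :=
  { f : (i : Fin (b - a)) → B.E (a + i.val) //
    ∀ (i : ℕ) (h : i + 1 < b - a), B.tgt (f ⟨i, by omega⟩) = B.src (f ⟨i + 1, h⟩) }

def telSrc {a b : ℕ} (hab : a < b) (f : B.TelE a b) : B.V a :=
  B.src (f.1 ⟨0, by omega⟩)

def telTgt {a b : ℕ} (hab : a < b) (f : B.TelE a b) : B.V b :=
  B.castV (by omega : a + (b - a - 1) + 1 = b) (B.tgt (f.1 ⟨b - a - 1, by omega⟩))

def telLT {a b : ℕ} (f g : B.TelE a b) : Prop :=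
  ∃ (N : ℕ) (h : N < b - a), B.elt (f.1 ⟨N, h⟩) (g.1 ⟨N, h⟩) ∧
    ∀ (i : ℕ) (hi : i < b - a), N < i → f.1 ⟨i, hi⟩ = g.1 ⟨i, hi⟩

noncomputable def Telescope (ns : ℕ → ℕ) (hmono : StrictMono ns) (h0 : ns 0 = 0) : BDiagram where
  V l := B.V (ns l)
  E l := B.TelE (ns l) (ns (l + 1))
  fintV l := B.fintV (ns l)
  fintE l := by
    classical
    letI : ∀ i : Fin (ns (l + 1) - ns l), Fintype (B.E (ns l + i.val)) := fun i => B.fintE _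
    exact Subtype.fintype _
  nonV l := B.nonV (ns l)
  rootSubsingleton := by show Subsingleton (B.V (ns 0)); rw [h0]; exact B.rootSubsingleton
  src {l} f := B.telSrc (hmono (Nat.lt_succ_self l)) f
  tgt {l} f := B.telTgt (hmono (Nat.lt_succ_self l)) f
  hasOut := by
    intro l v
    refine ⟨⟨fun i => B.chainFrom (ns l) v i.val,
      fun i h => (B.chainFrom_src_succ (ns l) v i).symm⟩, ?_⟩
    exact B.chainFrom_src_zero (ns l) v
  hasIn := by
    intro l w
    have hab : ns l < ns (l + 1) := hmono (Nat.lt_succ_self l)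
    have hj : ns l + (ns (l + 1) - ns l - 1) + 1 = ns (l + 1) := by omega
    refine ⟨⟨fun i => B.chainTo (ns l) (ns (l + 1) - ns l - 1) (B.castV hj.symm w) i.val
        (by omega), fun i h => B.chainTo_chain _ _ _ i (by omega) (by omega)⟩, ?_⟩
    show B.castV (by omega) (B.tgt (B.chainTo (ns l) (ns (l + 1) - ns l - 1)
      (B.castV hj.symm w) (ns (l + 1) - ns l - 1) (by omega))) = w
    rw [B.chainTo_tgt_last]
    exact B.castV_eq_of_heq _ (B.castV_heq _ w)
  elt {l} f g := B.telLT f g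
  elt_tgt := by
    rintro l f g ⟨N, hN, hlt, hgt⟩
    show B.telTgt _ f = B.telTgt _ g
    unfold telTgt
    refine congrArg (B.castV _) ?_
    rcases eq_or_lt_of_le (show N ≤ ns (l + 1) - ns l - 1 by omega) with h | h
    · subst h
      exact B.elt_tgt _ _ _ hlt
    · exact congrArg B.tgt (hgt _ (by omega) h)
  elt_irrefl := by
    rintro l f ⟨N, h, hlt, -⟩
    exact B.elt_irrefl _ _ hlt
  elt_trans := by
    rintro l f g h ⟨N₁, hN₁, hlt₁, hgt₁⟩ ⟨N₂, hN₂, hlt₂, hgt₂⟩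
    rcases lt_trichotomy N₁ N₂ with hc | hc | hc
    · exact ⟨N₂, hN₂, by rw [hgt₁ N₂ hN₂ hc]; exact hlt₂,
        fun i hi hN => (hgt₁ i hi (by omega)).trans (hgt₂ i hi hN)⟩
    · subst hc
      exact ⟨N₁, hN₁, B.elt_trans _ _ _ _ hlt₁ hlt₂,
        fun i hi hN => (hgt₁ i hi hN).trans (hgt₂ i hi hN)⟩
    · refine ⟨N₁, hN₁, ?_, fun i hi hN => (hgt₁ i hi hN).trans (hgt₂ i hi (by omega))⟩
      rw [← hgt₂ N₁ hN₁ hc]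
      exact hlt₁
  elt_total := by
    intro l f g htgt hne
    classical
    have hab : ns l < ns (l + 1) := hmono (Nat.lt_succ_self l)
    set b := ns (l + 1) - ns l with hb
    have hex : ∃ N, ∃ h : N < b, f.1 ⟨N, h⟩ ≠ g.1 ⟨N, h⟩ := by
      by_contra hco
      push_neg at hco
      exact hne (Subtype.ext (funext fun i => hco i.val i.isLt))
    set P : ℕ → Prop := fun N => ∃ h : N < b, f.1 ⟨N, h⟩ ≠ g.1 ⟨N, h⟩ with hP
    obtain ⟨N₀, hN₀⟩ := hex
    set N := Nat.findGreatest P b with hNdef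
    have hPN : P N := Nat.findGreatest_spec (le_of_lt hN₀.choose) hN₀
    have hafter : ∀ i (hi : i < b), N < i → f.1 ⟨i, hi⟩ = g.1 ⟨i, hi⟩ := by
      intro i hi hNi
      by_contra hcon
      exact Nat.findGreatest_is_greatest hNi (le_of_lt hi) ⟨hi, hcon⟩
    clear_value N
    obtain ⟨hNb, hNne⟩ := hPN
    have htgtN : B.tgt (f.1 ⟨N, hNb⟩) = B.tgt (g.1 ⟨N, hNb⟩) := by
      rcases eq_or_lt_of_le (show N ≤ b - 1 by omega) with h | h
      · -- N is the last index; use equality of targets of the composite edges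
        subst h
        exact B.castV_inj _ htgt
      · have h2 : f.1 ⟨N + 1, by omega⟩ = g.1 ⟨N + 1, by omega⟩ :=
          hafter (N + 1) (by omega) (by omega)
        rw [f.2 N (by omega), g.2 N (by omega), h2]
    rcases B.elt_total _ _ _ htgtN hNne with h | h
    · exact Or.inl ⟨N, hNb, h, hafter⟩
    · exact Or.inr ⟨N, hNb, h, fun i hi hN => (hafter i hi hN).symm⟩

def teleMap (ns : ℕ → ℕ) (hmono : StrictMono ns) (h0 : ns 0 = 0) (x : B.PathSpace) :
    (B.Telescope ns hmono h0).PathSpace :=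
  ⟨fun l => ⟨fun i => x.1 (ns l + i.val), fun i _ => x.2 (ns l + i)⟩, fun l => by
    have hab : ns l < ns (l + 1) := hmono (Nat.lt_succ_self l)
    have hm : ns l + (ns (l + 1) - ns l - 1) + 1 = ns (l + 1) := by omega
    show B.castV _ (B.tgt (x.1 (ns l + (ns (l + 1) - ns l - 1)))) = B.src (x.1 (ns (l + 1) + 0))
    rw [x.2 (ns l + (ns (l + 1) - ns l - 1))]
    exact B.castV_eq_of_heq _ (by rw [hm]; exact HEq.rfl)⟩


/-- Level `n+1` is uniformly ordered: there is a single nonempty block `P` of paths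
from the root to level `n` such that the `n`-basic block at every vertex at level
`n+1` is a positive power of `P`. -/
def UniformlyOrderedLevel (n : ℕ) : Prop :=
  ∃ (p : ℕ) (hp : 0 < p) (P : Fin p → B.FinPath n),
    ∀ v : B.V (n + 1), ∃ (m : ℕ), 0 < m ∧
      ∃ enum : Fin (m * p) ≃ { q : B.FinPath (n + 1) // B.EndsAt q v },
        (∀ i j : Fin (m * p), i < j ↔ B.finLT (enum i).1 (enum j).1) ∧
        (∀ i : Fin (m * p),
          B.truncTo n (Nat.le_succ n) (enum i).1 = P ⟨i.val % p, Nat.mod_lt _ hp⟩)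

/-- The ordinal label of an edge: its position in the linear order on the edges
into its target. -/
noncomputable def edgeLabel {n : ℕ} (e : B.E n) : ℕ := Nat.card { e' : B.E n // B.elt e' e }

/-- Deterministic: for every `n ≥ 1`, distinct edges with the same source at level
`n` have different ordinal labels. -/
def Deterministic : Prop :=
  ∀ n : ℕ, 1 ≤ n → ∀ e f : B.E n, B.src e = B.src f → e ≠ f →
    B.edgeLabel e ≠ B.edgeLabel f

end BDiagram

namespace BDiagram

variable (B : BDiagram)

theorem castE_src {m n : ℕ} (h : m = n) (e : B.E m) :
    B.src (B.castE h e) = B.castV h (B.src e) := by subst h; rfl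

theorem castE_tgt {m n : ℕ} (h : m = n) (e : B.E m) :
    B.tgt (B.castE h e) = B.castV (congrArg Nat.succ h) (B.tgt e) := by subst h; rfl

theorem castE_isMin {m n : ℕ} (h : m = n) {e : B.E m} (he : B.IsMinEdge e) :
    B.IsMinEdge (B.castE h e) := by subst h; exact he

theorem castV_castV {a b c : ℕ} (h1 : a = b) (h2 : b = c) (v : B.V a) :
    B.castV h2 (B.castV h1 v) = B.castV (h1.trans h2) v := by subst h1; subst h2; rfl

theorem castV_congr {a b c : ℕ} (h1 : a = c) (h2 : b = c) {A : B.V a} {B' : B.V b}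
    (hab : HEq A B') : B.castV h1 A = B.castV h2 B' := by
  subst h1; subst h2; exact eq_of_heq hab

theorem exists_minEdge {k : ℕ} (v : B.V (k + 1)) :
    ∃ e : B.E k, B.tgt e = v ∧ B.IsMinEdge e := by
  haveI : Fintype (B.E k) := B.fintE k
  haveI : IsTrans (B.E k) (fun a b => B.elt a b) := ⟨fun a b c => B.elt_trans k a b c⟩
  haveI : IsIrrefl (B.E k) (fun a b => B.elt a b) := ⟨fun a => B.elt_irrefl k a⟩
  have hwf : WellFounded (fun a b : B.E k => B.elt a b) :=
    Finite.wellFounded_of_trans_of_irrefl _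
  obtain ⟨e0, he0⟩ := B.hasIn k v
  obtain ⟨e, he, hmin⟩ := hwf.has_min {e | B.tgt e = v} ⟨e0, he0⟩
  exact ⟨e, he, fun e' h' =>
    hmin e' (by rw [Set.mem_setOf_eq, B.elt_tgt k e' e h']; exact he) h'⟩

theorem exists_succEdge {k : ℕ} {e : B.E k} (he : ¬ B.IsMaxEdge e) :
    ∃ f : B.E k, B.elt e f ∧ ∀ g, B.elt e g → g = f ∨ B.elt f g := by
  haveI : Fintype (B.E k) := B.fintE k
  haveI : IsTrans (B.E k) (fun a b => B.elt a b) := ⟨fun a b c => B.elt_trans k a b c⟩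
  haveI : IsIrrefl (B.E k) (fun a b => B.elt a b) := ⟨fun a => B.elt_irrefl k a⟩
  have hwf : WellFounded (fun a b : B.E k => B.elt a b) :=
    Finite.wellFounded_of_trans_of_irrefl _
  have hne : ∃ f, B.elt e f := by
    by_contra h; push_neg at h; exact he fun f hf => (h f) hf
  obtain ⟨f, hf, hmin⟩ := hwf.has_min {f | B.elt e f} hne
  refine ⟨f, hf, fun g hg => ?_⟩
  by_cases hgf : g = f
  · exact Or.inl hgf
  · have htg : B.tgt g = B.tgt f := by
      rw [← B.elt_tgt k e g hg, B.elt_tgt k e f hf]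
    rcases B.elt_total k g f htg hgf with h | h
    · exact absurd h (hmin g hg)
    · exact Or.inr h

structure MinTo (k : ℕ) (v : B.V k) where
  f : ∀ i, i < k → B.E i
  chain : ∀ i (h : i + 1 < k), B.tgt (f i (by omega)) = B.src (f (i + 1) h)
  ends : ∀ m (h : k = m + 1), B.tgt (f m (by omega)) = B.castV h v
  isMin : ∀ i (h : i < k), B.IsMinEdge (f i h)

noncomputable def minTo : (k : ℕ) → (v : B.V k) → B.MinTo k v
  | 0, _ =>
    { f := fun _ h => absurd h (by omega)
      chain := fun _ h => absurd h (by omega)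
      ends := fun _ h => absurd h (by omega)
      isMin := fun _ h => absurd h (by omega) }
  | k + 1, v =>
    let e := (B.exists_minEdge v).choose
    have he : B.tgt e = v ∧ B.IsMinEdge e := (B.exists_minEdge v).choose_spec
    let M := minTo k (B.src e)
    { f := fun i h => if h' : i < k then M.f i h' else B.castE (show k = i by omega) e
      chain := by
        intro i h
        beta_reduce
        by_cases h1 : i + 1 < k
        · rw [dif_pos (by omega : i < k), dif_pos h1]; exact M.chain i h1
        · rw [dif_pos (by omega : i < k), dif_neg h1]
          rw [B.castE_src]
          exact M.ends i (by omega)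
      ends := by
        intro m h
        beta_reduce
        rw [dif_neg (show ¬ m < k by omega), B.castE_tgt, he.1]
      isMin := by
        intro i h
        beta_reduce
        by_cases h' : i < k
        · rw [dif_pos h']; exact M.isMin i h'
        · rw [dif_neg h']; exact B.castE_isMin _ he.2 }


theorem chainFrom_src_eq (a : ℕ) (v : B.V a) (d : ℕ) (hd : d = 0) :
    B.src (B.chainFrom a v d) = B.castV (show a = a + d by omega) v := by
  subst hd; exact B.chainFrom_src_zero a v

theorem chainFrom_src_succ' (a : ℕ) (v : B.V a) (d d' : ℕ) (h : d' = d + 1) :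
    HEq (B.src (B.chainFrom a v d')) (B.tgt (B.chainFrom a v d)) := by
  subst h; rw [B.chainFrom_src_succ]

noncomputable def minThru (k : ℕ) (v : B.V k) : B.PathSpace :=
  ⟨fun i => if h : i < k then (B.minTo k v).f i h
      else B.castE (show k + (i - k) = i by omega) (B.chainFrom k v (i - k)), by
    intro i
    beta_reduce
    by_cases h1 : i + 1 < k
    · rw [dif_pos (by omega : i < k), dif_pos h1]; exact (B.minTo k v).chain i h1
    · by_cases h2 : i < k
      · rw [dif_pos h2, dif_neg h1, B.castE_src,
            B.chainFrom_src_eq k v _ (show i + 1 - k = 0 by omega), B.castV_castV]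
        exact (B.minTo k v).ends i (by omega)
      · rw [dif_neg h2, dif_neg h1, B.castE_tgt, B.castE_src]
        exact B.castV_congr _ _ (B.chainFrom_src_succ' k v (i - k) (i + 1 - k) (by omega)).symm⟩

theorem vershik_step (T : B.PathSpace ≃ B.PathSpace) (hT : B.IsVershik T)
    (z : B.PathSpace) (j : ℕ) (hbelow : ∀ i, i < j → B.IsMaxEdge (z.1 i))
    (hj : ¬ B.IsMaxEdge (z.1 j)) :
    (∀ i, i < j → B.IsMinEdge ((T z).1 i)) ∧ (∀ i, j < i → (T z).1 i = z.1 i) ∧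
    B.elt (z.1 j) ((T z).1 j) ∧
    (∀ g : B.E j, B.elt (z.1 j) g → g = (T z).1 j ∨ B.elt ((T z).1 j) g) := by
  classical
  obtain ⟨e', helt, hsucc⟩ := B.exists_succEdge hj
  have htgt' : B.tgt e' = B.tgt (z.1 j) := (B.elt_tgt j _ _ helt).symm
  set M := B.minTo j (B.src e') with hM
  set wf : ∀ i, B.E i := fun i =>
    if h : i < j then M.f i h else if h' : j = i then B.castE h' e' else z.1 i
    with hwf
  have hwlt : ∀ i (h : i < j), wf i = M.f i h := by
    intro i h
    show (if h : i < j then M.f i h else if h' : j = i then B.castE h' e' else z.1 i) = _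
    rw [dif_pos h]
  have hwj : wf j = e' := by
    show (if h : j < j then M.f j h else if h' : j = j then B.castE h' e' else z.1 j) = _
    rw [dif_neg (lt_irrefl j), dif_pos rfl]
    rfl
  have hwgt : ∀ i, j < i → wf i = z.1 i := by
    intro i hi
    show (if h : i < j then M.f i h else if h' : j = i then B.castE h' e' else z.1 i) = _
    rw [dif_neg (by omega : ¬ i < j), dif_neg (by omega : ¬ j = i)]
  have hchain : ∀ i, B.tgt (wf i) = B.src (wf (i + 1)) := by
    intro i
    by_cases h1 : i + 1 < j
    · rw [hwlt i (by omega), hwlt (i + 1) h1]; exact M.chain i h1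
    · by_cases h2 : i + 1 = j
      · subst h2
        rw [hwlt i (by omega), hwj]
        exact M.ends i rfl
      · by_cases h3 : i = j
        · subst h3
          rw [hwj, hwgt (i + 1) (by omega), htgt']
          exact z.2 i
        · rw [hwgt i (by omega), hwgt (i + 1) (by omega)]
          exact z.2 i
  set w : B.PathSpace := ⟨wf, hchain⟩ with hwdef
  have hw1 : ∀ i, w.1 i = wf i := fun i => rfl
  have hzw : B.pathLT z w := by
    refine ⟨j, ?_, fun i hi => ?_⟩
    · rw [hw1, hwj]; exact helt
    · rw [hw1, hwgt i hi]
  have hleast : ∀ u : B.PathSpace, B.pathLT z u → u = w ∨ B.pathLT w u := by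
    rintro u ⟨N, hNel, hNag⟩
    rcases lt_trichotomy N j with hNj | rfl | hNj
    · exact absurd hNel (hbelow N hNj _)
    · rcases hsucc (u.1 N) hNel with hej | hej
      · by_cases huw : u = w
        · exact Or.inl huw
        · right
          have hag : ∀ i, N ≤ i → w.1 i = u.1 i := by
            intro i hi
            rcases eq_or_lt_of_le hi with rfl | hlt
            · rw [hw1, hwj]; exact hej.symm
            · rw [hw1, hwgt i hlt]; exact hNag i hlt
          have hexd : ∃ i, w.1 i ≠ u.1 i := by
            by_contra hco; push_neg at hco
            exact huw (Subtype.ext (funext fun i => (hco i).symm))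
          set P : ℕ → Prop := fun i => w.1 i ≠ u.1 i with hP
          obtain ⟨i0, hi0⟩ := hexd
          have hi0j : i0 < N := by
            by_contra hge; exact hi0 (hag i0 (by omega))
          set D := Nat.findGreatest P N with hD
          have hPD : P D := Nat.findGreatest_spec (le_of_lt hi0j) hi0
          have hDj : D < N := by
            have hle : D ≤ N := Nat.findGreatest_le N
            rcases lt_or_eq_of_le hle with h | he
            · exact h
            · exfalso; rw [he] at hPD; exact hPD (hag N le_rfl)
          have hagD : ∀ i, D < i → w.1 i = u.1 i := by
            intro i hi
            by_cases hij : i ≤ N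
            · by_contra hne
              exact Nat.findGreatest_is_greatest hi hij hne
            · exact hag i (by omega)
          have htD : B.tgt (w.1 D) = B.tgt (u.1 D) := by
            rw [w.2 D, hagD (D + 1) (by omega), u.2 D]
          have hmine : B.IsMinEdge (w.1 D) := by
            rw [hw1, hwlt D hDj]; exact M.isMin D hDj
          rcases B.elt_total D _ _ htD hPD with h | h
          · exact ⟨D, h, fun i hi => hagD i hi⟩
          · exact absurd h (hmine _)
      · right
        refine ⟨N, ?_, fun i hi => ?_⟩
        · rw [hw1, hwj]; exact hej
        · rw [hw1, hwgt i hi]; exact hNag i hi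
    · right
      refine ⟨N, ?_, fun i hi => ?_⟩
      · rw [hw1, hwgt N hNj]; exact hNel
      · rw [hw1, hwgt i (by omega)]; exact hNag i hi
  have hnm : ¬ B.IsMaxPath z := fun hm => hj (hm j)
  obtain ⟨hlt1, hmin1⟩ := hT.1 z hnm
  have hTzw : T z = w := by
    rcases hleast (T z) hlt1 with h | h
    · exact h
    · exact absurd h (hmin1 w hzw)
  rw [hTzw]
  refine ⟨fun i hi => ?_, fun i hi => ?_, ?_, fun g hg => ?_⟩
  · rw [hw1, hwlt i hi]; exact M.isMin i hi
  · rw [hw1, hwgt i hi]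
  · rw [hw1, hwj]; exact helt
  · rw [hw1, hwj]; exact hsucc g hg

theorem minThru_isMin (k : ℕ) (v : B.V k) (i : ℕ) (h : i < k) :
    B.IsMinEdge ((B.minThru k v).1 i) := by
  have he : (B.minThru k v).1 i = (B.minTo k v).f i h := by
    simp only [minThru]; rw [dif_pos h]
  rw [he]; exact (B.minTo k v).isMin i h

theorem minThru_tgt (k : ℕ) (v : B.V k) (m : ℕ) (h : k = m + 1) :
    B.tgt ((B.minThru k v).1 m) = B.castV h v := by
  have he : (B.minThru k v).1 m = (B.minTo k v).f m (by omega) := by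
    simp only [minThru]; rw [dif_pos (by omega : m < k)]
  rw [he]; exact (B.minTo k v).ends m h

end BDiagram

/-- A Bratteli–Vershik system: a simple, properly ordered ordered Bratteli diagram
together with its Vershik map. -/
structure BVSystem where
  B : BDiagram
  T : B.PathSpace ≃ B.PathSpace
  proper : B.ProperlyOrdered
  simple : B.Simple
  vershik : B.IsVershik T

/-- Conjugacy of systems: an equivariant homeomorphism of the path spaces taking
minimal paths to minimal paths. -/
def Conjugate (S S' : BVSystem) : Prop :=
  ∃ φ : S.B.PathSpace ≃ S'.B.PathSpace,
    (@Continuous _ _ S.B.pathTop S'.B.pathTop φ) ∧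
    (@Continuous _ _ S'.B.pathTop S.B.pathTop φ.symm) ∧
    (∀ x, φ (S.T x) = S'.T (φ x)) ∧
    (∀ x, S.B.IsMinPath x → S'.B.IsMinPath (φ x))

/-- An odometer: a system whose diagram has exactly one vertex at every level. -/
def IsOdometer (S : BVSystem) : Prop := ∀ n, Subsingleton (S.B.V n)

/-- If level `n+1` of a simple, properly ordered Bratteli–Vershik
system is uniformly ordered and has more than one vertex, then there is a depth `n`
pair of paths with an `(n+1)` cut. -/
theorem uniformlyOrdered_level_gives_cut
    (B : BDiagram) (T : B.PathSpace ≃ B.PathSpace)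
    (hproper : B.ProperlyOrdered) (hsimple : B.Simple) (hT : B.IsVershik T)
    (n : ℕ) (huo : B.UniformlyOrderedLevel n) (hwide : 1 < Nat.card (B.V (n + 1))) :
    ∃ x y : B.PathSpace, B.DepthPair T n x y ∧ B.HasCut T (n + 1) x y := by
  classical
  letI := B.fintV (n + 1)
  rw [Nat.card_eq_fintype_card] at hwide
  obtain ⟨v, w, hvw⟩ := Fintype.exists_pair_of_one_lt_card hwide
  obtain ⟨p, hp, P, hP⟩ := huo
  choose mfun hmpos enum henum htrunc using hP
  set x := B.minThru (n + 1) v with hxdef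
  set y := B.minThru (n + 1) w with hydef
  have hxmin : ∀ i, i < n + 1 → B.IsMinEdge (x.1 i) := fun i hi =>
    B.minThru_isMin (n + 1) v i hi
  have hymin : ∀ i, i < n + 1 → B.IsMinEdge (y.1 i) := fun i hi =>
    B.minThru_isMin (n + 1) w i hi
  set vtx : B.PathSpace → B.V (n + 1) := fun z => B.pathVert z (n + 1) with hvtx
  set qz : ∀ z : B.PathSpace, { q : B.FinPath (n + 1) // B.EndsAt q (vtx z) } :=
    fun z => ⟨B.pathInit z (n + 1), B.pathInit_endsAt z (n + 1)⟩ with hqzdef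
  set idx : B.PathSpace → ℕ := fun z => ((enum (vtx z)).symm (qz z)).val with hidxdef
  have hidx_lt : ∀ z, idx z < mfun (vtx z) * p := fun z => ((enum (vtx z)).symm (qz z)).isLt
  have henum_idx : ∀ z, enum (vtx z) ⟨idx z, hidx_lt z⟩ = qz z := by
    intro z
    have h1 : (⟨idx z, hidx_lt z⟩ : Fin (mfun (vtx z) * p)) = (enum (vtx z)).symm (qz z) :=
      Fin.ext rfl
    rw [h1, Equiv.apply_symm_apply]
  have hbot : ∀ z : B.PathSpace, (∀ i, i < n + 1 → B.IsMinEdge (z.1 i)) → idx z = 0 := by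
    intro z hz
    by_contra h0
    have hpos : 0 < idx z := Nat.pos_of_ne_zero h0
    have hfin : (⟨0, Nat.mul_pos (hmpos _) hp⟩ : Fin (mfun (vtx z) * p)) < ⟨idx z, hidx_lt z⟩ :=
      Fin.mk_lt_mk.mpr hpos
    have hflt := ((henum (vtx z)) _ _).mp hfin
    rw [henum_idx z] at hflt
    obtain ⟨N, hN, hel, -⟩ := hflt
    exact hz N hN _ hel
  have htop : ∀ z : B.PathSpace, (∀ i, i < n + 1 → B.IsMaxEdge (z.1 i)) →
      idx z = mfun (vtx z) * p - 1 := by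
    intro z hz
    have hK : 0 < mfun (vtx z) * p := Nat.mul_pos (hmpos _) hp
    by_contra h0
    have hlt2 : idx z < mfun (vtx z) * p - 1 := by
      have := hidx_lt z; omega
    have hfin : (⟨idx z, hidx_lt z⟩ : Fin (mfun (vtx z) * p)) <
        ⟨mfun (vtx z) * p - 1, by omega⟩ := Fin.mk_lt_mk.mpr hlt2
    have hflt := ((henum (vtx z)) _ _).mp hfin
    rw [henum_idx z] at hflt
    obtain ⟨N, hN, hel, -⟩ := hflt
    exact hz N hN _ hel
  have hidx_cast : ∀ (a b : B.V (n + 1)) (h : a = b)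
      (q : { q : B.FinPath (n + 1) // B.EndsAt q a }),
      ((enum a).symm q).val = ((enum b).symm ⟨q.1, h ▸ q.2⟩).val := by
    rintro a b rfl q; rfl
  have hstep : ∀ z : B.PathSpace, idx (T z) % p = (idx z + 1) % p := by
    intro z
    by_cases hcase : ∃ j, j < n + 1 ∧ ¬ B.IsMaxEdge (z.1 j)
    · obtain ⟨j0, hj0n, hj0⟩ := hcase
      have hex : ∃ j, ¬ B.IsMaxEdge (z.1 j) := ⟨j0, hj0⟩
      obtain ⟨j, hjn, hjspec, hjmax⟩ :
          ∃ j, j < n + 1 ∧ ¬ B.IsMaxEdge (z.1 j) ∧ ∀ i, i < j → B.IsMaxEdge (z.1 i) := by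
        refine ⟨Nat.find hex, ?_, Nat.find_spec hex, fun i hi => of_not_not (Nat.find_min hex hi)⟩
        have : Nat.find hex ≤ j0 := Nat.find_min' hex hj0
        omega
      obtain ⟨hmin, hagree, helt, hsucc⟩ := B.vershik_step T hT z j hjmax hjspec
      have hv : vtx (T z) = vtx z := by
        show B.src ((T z).1 (n + 1)) = B.src (z.1 (n + 1))
        rw [hagree (n + 1) (by omega)]
      set q2 : { q : B.FinPath (n + 1) // B.EndsAt q (vtx z) } :=
        ⟨(qz (T z)).1, hv ▸ (qz (T z)).2⟩ with hq2
      have hidxTz : idx (T z) = ((enum (vtx z)).symm q2).val := hidx_cast _ _ hv _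
      have hq2e : ∀ (i : ℕ) (hi : i < n + 1), (q2.1).1 ⟨i, hi⟩ = (T z).1 i := fun i hi => rfl
      have hclaim : ∀ q3 : B.FinPath (n + 1), B.finLT (qz z).1 q3 →
          q3 = q2.1 ∨ B.finLT q2.1 q3 := by
        rintro q3 ⟨N, hN, h3el, h3ag⟩
        rcases lt_trichotomy N j with hNj | rfl | hNj
        · exact absurd h3el (hjmax N hNj _)
        · rcases hsucc (q3.1 ⟨N, hN⟩) h3el with hej | hej
          · by_cases h3w : q3 = q2.1
            · exact Or.inl h3w
            · right
              have hag : ∀ (i : ℕ) (hi : i < n + 1), N ≤ i →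
                  (q2.1).1 ⟨i, hi⟩ = q3.1 ⟨i, hi⟩ := by
                intro i hi hNi
                rcases eq_or_lt_of_le hNi with rfl | hlt
                · rw [hq2e]; exact hej.symm
                · rw [hq2e, hagree i hlt]; exact h3ag i hi hlt
              have hexd : ∃ (i : ℕ) (hi : i < n + 1), (q2.1).1 ⟨i, hi⟩ ≠ q3.1 ⟨i, hi⟩ := by
                by_contra hco; push_neg at hco
                exact h3w (Subtype.ext (funext fun i => (hco i.val i.isLt).symm))
              set Pd : ℕ → Prop :=
                fun i => ∃ hi : i < n + 1, (q2.1).1 ⟨i, hi⟩ ≠ q3.1 ⟨i, hi⟩ with hPd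
              obtain ⟨i0, hi0n, hi0⟩ := hexd
              have hi0j : i0 < N := by
                by_contra hge
                exact hi0 (hag i0 hi0n (by omega))
              set D := Nat.findGreatest Pd N with hDdef
              have hPD : Pd D := Nat.findGreatest_spec (le_of_lt hi0j) ⟨hi0n, hi0⟩
              obtain ⟨hDn, hDne⟩ := hPD
              have hDN : D < N := by
                have hle : D ≤ N := Nat.findGreatest_le N
                rcases lt_or_eq_of_le hle with h | he
                · exact h
                · exact absurd (hag D hDn (by omega)) hDne
              have hagD : ∀ (i : ℕ) (hi : i < n + 1), D < i →
                  (q2.1).1 ⟨i, hi⟩ = q3.1 ⟨i, hi⟩ := by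
                intro i hi hDi
                by_cases hiN : i ≤ N
                · by_contra hne
                  exact Nat.findGreatest_is_greatest hDi hiN ⟨hi, hne⟩
                · exact hag i hi (by omega)
              have htD : B.tgt ((q2.1).1 ⟨D, hDn⟩) = B.tgt (q3.1 ⟨D, hDn⟩) := by
                have h1 := q3.2 D (show D + 1 < n + 1 by omega)
                have h2 := (q2.1).2 D (show D + 1 < n + 1 by omega)
                rw [h1, h2, hagD (D + 1) (by omega) (by omega)]
              have hmine : B.IsMinEdge ((q2.1).1 ⟨D, hDn⟩) := by
                rw [hq2e]; exact hmin D (by omega)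
              rcases B.elt_total D ((q2.1).1 ⟨D, hDn⟩) (q3.1 ⟨D, hDn⟩) htD hDne with h | h
              · exact ⟨D, hDn, h, fun i hi hDi => hagD i hi hDi⟩
              · exact absurd h (hmine _)
          · right
            refine ⟨N, hN, ?_, fun i hi hNi => ?_⟩
            · rw [hq2e]; exact hej
            · rw [hq2e, hagree i hNi]; exact h3ag i hi hNi
        · right
          refine ⟨N, hN, ?_, fun i hi hNi => ?_⟩
          · rw [hq2e, hagree N hNj]; exact h3el
          · rw [hq2e, hagree i (by omega)]; exact h3ag i hi hNi
      have hflt0 : B.finLT (qz z).1 q2.1 := by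
        refine ⟨j, hjn, ?_, fun i hi hji => ?_⟩
        · rw [hq2e]; exact helt
        · rw [hq2e]; exact (hagree i hji).symm
      set K := mfun (vtx z) * p with hK
      set r : Fin K := (enum (vtx z)).symm (qz z) with hr
      set s : Fin K := (enum (vtx z)).symm q2 with hs
      have her : enum (vtx z) r = qz z := by rw [hr]; exact Equiv.apply_symm_apply _ _
      have hes : enum (vtx z) s = q2 := by rw [hs]; exact Equiv.apply_symm_apply _ _
      have hrs : r < s := ((henum (vtx z)) r s).mpr (by rw [her, hes]; exact hflt0)
      have hrsv : r.val < s.val := Fin.lt_def.mp hrs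
      have hr1K : r.val + 1 < K := by have := s.isLt; omega
      have hseq : s.val = r.val + 1 := by
        by_contra hne
        have h4 : r.val + 1 < s.val := by omega
        have hflt4 : B.finLT (qz z).1 (enum (vtx z) ⟨r.val + 1, hr1K⟩).1 := by
          have h6 : r < (⟨r.val + 1, hr1K⟩ : Fin K) := Fin.lt_def.mpr (Nat.lt_succ_self _)
          have h7 := ((henum (vtx z)) r ⟨r.val + 1, hr1K⟩).mp h6
          rw [her] at h7
          exact h7
        rcases hclaim _ hflt4 with h | h
        · have h7 : enum (vtx z) ⟨r.val + 1, hr1K⟩ = q2 := Subtype.ext h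
          have h8 : (⟨r.val + 1, hr1K⟩ : Fin K) = s := by
            rw [hs, ← h7, Equiv.symm_apply_apply]
          have h9 : r.val + 1 = s.val := congrArg Fin.val h8
          omega
        · have h9 : s < (⟨r.val + 1, hr1K⟩ : Fin K) :=
            ((henum (vtx z)) s ⟨r.val + 1, hr1K⟩).mpr (by rw [hes]; exact h)
          have h10 : s.val < r.val + 1 := Fin.lt_def.mp h9
          omega
      rw [hidxTz]
      show s.val % p = (idx z + 1) % p
      rw [hseq]
    · push_neg at hcase
      have h1 : idx z = mfun (vtx z) * p - 1 := htop z hcase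
      have h2 : ∀ i, i < n + 1 → B.IsMinEdge ((T z).1 i) := by
        by_cases hzm : B.IsMaxPath z
        · intro i _; exact hT.2 z hzm i
        · have hex : ∃ j, ¬ B.IsMaxEdge (z.1 j) := by
            by_contra hc; push_neg at hc; exact hzm hc
          obtain ⟨hmin, -, -, -⟩ := B.vershik_step T hT z (Nat.find hex)
            (fun i hi => of_not_not (Nat.find_min hex hi)) (Nat.find_spec hex)
          intro i hi
          apply hmin
          have hnf : n + 1 ≤ Nat.find hex := by
            by_contra hlt; push_neg at hlt
            exact (Nat.find_spec hex) (hcase _ hlt)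
          omega
      have h3 : idx (T z) = 0 := hbot (T z) h2
      rw [h3, h1, Nat.sub_add_cancel (Nat.mul_pos (hmpos _) hp), Nat.mul_mod_left]
      exact Nat.zero_mod p
  have hiter0 : ∀ z : B.PathSpace, (B.iterZ T 0) z = z := by
    intro z
    show ((T : Equiv.Perm B.PathSpace) ^ (0 : ℤ)) z = z
    rw [zpow_zero]; rfl
  have hiter : ∀ (m : ℤ) (z : B.PathSpace), (B.iterZ T (m + 1)) z = T ((B.iterZ T m) z) := by
    intro m z
    show ((T : Equiv.Perm B.PathSpace) ^ (m + 1)) z = _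
    rw [show m + 1 = 1 + m by ring, zpow_add, zpow_one]
    rfl
  have hinv : ∀ m : ℤ, idx ((B.iterZ T m) x) % p = idx ((B.iterZ T m) y) % p := by
    intro m
    induction m using Int.induction_on with
    | zero => rw [hiter0, hiter0, hbot x hxmin, hbot y hymin]
    | succ i ih =>
        rw [hiter i x, hiter i y, hstep, hstep]
        exact Nat.ModEq.add_right 1 ih
    | pred i ih =>
        have e1 := hiter (-(i : ℤ) - 1) x
        have e2 := hiter (-(i : ℤ) - 1) y
        rw [show (-(i : ℤ) - 1 + 1) = -(i : ℤ) by ring] at e1 e2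
        rw [e1, e2, hstep, hstep] at ih
        exact Nat.ModEq.add_right_cancel' 1 ih
  have hxyn : x.1 n ≠ y.1 n := by
    intro he
    have h1 := B.minThru_tgt (n + 1) v n rfl
    have h2 := B.minThru_tgt (n + 1) w n rfl
    have h3 : B.castV (rfl : n + 1 = n + 1) v = B.castV rfl w := by
      rw [← h1, ← h2]; exact congrArg B.tgt he
    exact hvw h3
  have hPkey : ∀ (z : B.PathSpace) (i : ℕ) (hi : i < n),
      z.1 i = (P ⟨idx z % p, Nat.mod_lt _ hp⟩).1 ⟨i, hi⟩ := by
    intro z i hi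
    have ht := htrunc (vtx z) ⟨idx z, hidx_lt z⟩
    rw [henum_idx z] at ht
    exact congrArg (fun q : B.FinPath n => q.1 ⟨i, hi⟩) ht
  have hcode : B.SameCoding T n x y := by
    intro m i hi
    rw [hPkey ((B.iterZ T m) x) i hi, hPkey ((B.iterZ T m) y) i hi]
    have h2 : (⟨idx ((B.iterZ T m) x) % p, Nat.mod_lt _ hp⟩ : Fin p) =
        ⟨idx ((B.iterZ T m) y) % p, Nat.mod_lt _ hp⟩ := Fin.ext (hinv m)
    rw [h2]
  refine ⟨x, y, ⟨fun he => hxyn (by rw [he]), hcode, fun hsc => ?_⟩,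
    ⟨0, fun i hi => ?_, fun i hi => ?_⟩⟩
  · have h5 := hsc 0 n (by omega)
    rw [hiter0, hiter0] at h5
    exact hxyn h5
  · rw [hiter0]; exact hxmin i hi
  · rw [hiter0]; exact hymin i hi
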